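/- Let H be an infinite-dimensional Hilbert space. Then every continuous trace on K(H) is zero: if f is a bounded linear functional on the C*-algebra K(H) of compact operators with f(ab) = f(ba) for all a,b ∈ K(H), then f = 0. -/

import Mathlib

/-!
STATEMENT 10: Every continuous trace on the algebra `K(H)` of compact operators
on an infinite-dimensional Hilbert space `H` is zero.
-/

variable (H : Type*) [NormedAddCommGroup H] [InnerProductSpace ℂ H] [CompleteSpace H]

/-- The algebra of compact operators on `H`, as a (non-unital, closed)
subalgebra of `B(H)`. -/
def compactOperators : NonUnitalSubalgebra ℂ (H →L[ℂ] H) where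
  carrier := {T : H →L[ℂ] H | IsCompactOperator T}
  add_mem' := by
    intro a b ha hb
    exact ha.add hb
  zero_mem' := isCompactOperator_zero
  smul_mem' := by
    intro c a ha
    exact ha.smul c
  mul_mem' := by
    intro a b ha hb
    exact ha.comp_clm b

section Aux

set_option linter.unusedSectionVars false
set_option maxHeartbeats 1000000

open scoped InnerProductSpace ComplexConjugate

variable {H}

/-- Rank-one operator `v ↦ ⟪y, v⟫ • x`. -/
noncomputable def rkAux (x y : H) : H →L[ℂ] H := (innerSL ℂ y).smulRight x

lemma rkAux_apply (x y v : H) : rkAux x y v = ⟪y, v⟫_ℂ • x := rfl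

lemma rkAux_compact (x y : H) : IsCompactOperator (rkAux x y) := by
  have h1 : IsCompactOperator (ContinuousLinearMap.toSpanSingleton ℂ x) := by
    refine ⟨(fun c : ℂ => c • x) '' Metric.closedBall 0 1, ?_, ?_⟩
    · exact (isCompact_closedBall 0 1).image (by fun_prop)
    · filter_upwards [Metric.closedBall_mem_nhds (0 : ℂ) one_pos] with c hc
      exact ⟨c, hc, rfl⟩
  exact h1.comp_clm (innerSL ℂ y)

lemma rkAux_mul (x y z w : H) :
    (rkAux x y) * (rkAux z w) = ⟪y, z⟫_ℂ • rkAux x w := by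
  ext v
  simp [rkAux_apply, ContinuousLinearMap.mul_apply, inner_smul_right, smul_smul, mul_comm]

/-- Rank-one operator as an element of the compact operators. -/
noncomputable def rkC (x y : H) : compactOperators H := ⟨rkAux x y, rkAux_compact x y⟩

lemma rkC_mul (x y z w : H) : rkC x y * rkC z w = ⟪y, z⟫_ℂ • rkC x w := by
  apply Subtype.ext
  exact rkAux_mul x y z w

lemma exists_on_seq (hinf : ¬ FiniteDimensional ℂ H) :
    ∃ e : ℕ → H, Orthonormal ℂ e := by
  obtain ⟨w, b, hb⟩ := exists_hilbertBasis ℂ H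
  have hw : w.Infinite := by
    intro hfin
    apply hinf
    have hd := b.dense_span
    rw [hb, Subtype.range_coe] at hd
    have hfd : FiniteDimensional ℂ (Submodule.span ℂ w) :=
      FiniteDimensional.span_of_finite ℂ hfin
    have hclosed : IsClosed (Submodule.span ℂ w : Set H) :=
      Submodule.closed_of_finiteDimensional _
    have htop : Submodule.span ℂ w = ⊤ := by
      rw [← hclosed.submodule_topologicalClosure_eq, hd]
    rw [htop] at hfd
    exact Module.Finite.equiv (Submodule.topEquiv)
  set emb := hw.natEmbedding with hemb
  exact ⟨fun n => b (emb n), b.orthonormal.comp _ (emb.injective)⟩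

lemma norm_sum_rkC_le {e : ℕ → H} (he : Orthonormal ℂ e) (N : ℕ) :
    ‖∑ n ∈ Finset.range N, rkC (e n) (e n)‖ ≤ 1 := by
  have hcoe : ((∑ n ∈ Finset.range N, rkC (e n) (e n) : compactOperators H) : H →L[ℂ] H)
      = ∑ n ∈ Finset.range N, rkAux (e n) (e n) :=
    AddSubmonoidClass.coe_finset_sum _ _
  show ‖((∑ n ∈ Finset.range N, rkC (e n) (e n) : compactOperators H) : H →L[ℂ] H)‖ ≤ 1
  rw [hcoe]
  refine ContinuousLinearMap.opNorm_le_bound _ zero_le_one fun v => ?_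
  rw [one_mul]
  have happ : (∑ n ∈ Finset.range N, rkAux (e n) (e n)) v
      = ∑ n ∈ Finset.range N, (fun n => ⟪e n, v⟫_ℂ) n • e n := by
    simp [ContinuousLinearMap.sum_apply, rkAux_apply]
  rw [happ]
  set S : H := ∑ n ∈ Finset.range N, (fun n => ⟪e n, v⟫_ℂ) n • e n with hS
  have h1 : (⟪S, S⟫_ℂ) = ∑ n ∈ Finset.range N, conj (⟪e n, v⟫_ℂ) * ⟪e n, v⟫_ℂ :=
    he.inner_sum _ _ _
  have h2 : (⟪S, S⟫_ℂ) = ((∑ n ∈ Finset.range N, ‖⟪e n, v⟫_ℂ‖ ^ 2 : ℝ) : ℂ) := by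
    rw [h1]
    simp only [RCLike.conj_mul]
    push_cast
    rfl
  have h3 : ‖S‖ ^ 2 = ∑ n ∈ Finset.range N, ‖⟪e n, v⟫_ℂ‖ ^ 2 := by
    rw [inner_self_eq_norm_sq_to_K (𝕜 := ℂ)] at h2
    rw [← RCLike.ofReal_pow] at h2
    exact RCLike.ofReal_inj.mp h2
  have h4 : ∑ n ∈ Finset.range N, ‖⟪e n, v⟫_ℂ‖ ^ 2 ≤ ‖v‖ ^ 2 :=
    he.sum_inner_products_le v
  nlinarith [norm_nonneg S, norm_nonneg v]

lemma exists_finrank_approx (T : H →L[ℂ] H) (hT : IsCompactOperator T) {ε : ℝ} (hε : 0 < ε) :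
    ∃ (n : ℕ) (x y : Fin n → H), ‖T - ∑ i, rkAux (x i) (y i)‖ ≤ ε := by
  classical
  obtain ⟨K, hK, hTK⟩ := hT.image_closedBall_subset_compact 1
  obtain ⟨t, htfin, htcover⟩ := Metric.totallyBounded_iff.mp hK.totallyBounded (ε/2) (by linarith)
  set V : Submodule ℂ H := Submodule.span ℂ t with hV
  haveI : FiniteDimensional ℂ V := FiniteDimensional.span_of_finite ℂ htfin
  haveI : CompleteSpace V := FiniteDimensional.complete ℂ V
  set P : H →L[ℂ] H := V.subtypeL.comp (V.orthogonalProjection) with hP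
  set F : H →L[ℂ] H := P.comp T with hF
  have hbound : ∀ v : H, ‖v‖ ≤ 1 → ‖T v - F v‖ ≤ ε / 2 := by
    intro v hv
    have hTv : T v ∈ K := hTK ⟨v, by simpa using hv, rfl⟩
    obtain ⟨y, hyt, hyball⟩ := Set.mem_iUnion₂.mp (htcover hTv)
    have hyV : y ∈ V := Submodule.subset_span hyt
    have hmin : ‖T v - P (T v)‖ ≤ ‖T v - y‖ := by
      have := Submodule.starProjection_minimal (U := V) (T v)
      have h2 : ‖T v - P (T v)‖ = ⨅ x : V, ‖T v - x‖ := this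
      rw [h2]
      exact ciInf_le ⟨0, fun _ ⟨x, hx⟩ => hx ▸ norm_nonneg _⟩ (⟨y, hyV⟩ : V)
    have : ‖T v - y‖ < ε / 2 := by
      rw [← dist_eq_norm]; exact Metric.mem_ball.mp hyball
    calc ‖T v - F v‖ = ‖T v - P (T v)‖ := rfl
      _ ≤ ‖T v - y‖ := hmin
      _ ≤ ε / 2 := this.le
  have hnorm : ‖T - F‖ ≤ ε := by
    refine ContinuousLinearMap.opNorm_le_bound _ hε.le fun v => ?_
    rcases eq_or_ne v 0 with rfl | hv0
    · simp
    · have hvpos : (0:ℝ) < ‖v‖ := norm_pos_iff.mpr hv0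
      have := hbound (‖v‖⁻¹ • v) (by
        rw [norm_smul, norm_inv, norm_norm, inv_mul_cancel₀ hvpos.ne']
        )
      have heq : (T - F) (‖v‖⁻¹ • v) = ‖v‖⁻¹ • ((T - F) v) := by
        simp [map_smul, smul_sub]
      have h3 : ‖(T - F) (‖v‖⁻¹ • v)‖ = ‖v‖⁻¹ * ‖(T - F) v‖ := by
        rw [heq, norm_smul, norm_inv, norm_norm]
      have h4 : ‖v‖⁻¹ * ‖(T-F) v‖ ≤ ε / 2 := by
        rw [← h3]
        simpa [ContinuousLinearMap.sub_apply] using this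
      have : ‖(T-F) v‖ ≤ (ε/2) * ‖v‖ := by
        rw [inv_mul_le_iff₀ hvpos] at h4
        linarith [h4]
      calc ‖(T-F) v‖ ≤ (ε/2) * ‖v‖ := this
        _ ≤ ε * ‖v‖ := by nlinarith
  set b := stdOrthonormalBasis ℂ V with hb
  set n := Module.finrank ℂ V
  refine ⟨n, fun i => (b i : H), fun i => (ContinuousLinearMap.adjoint F) (b i : H), ?_⟩
  have hFeq : F = ∑ i, rkAux ((b i : H)) ((ContinuousLinearMap.adjoint F) (b i : H)) := by
    ext v
    have hx : F v = ((V.orthogonalProjection (T v) : V) : H) := rfl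
    set x : V := V.orthogonalProjection (T v) with hxdef
    have hrepr : (x : H) = ∑ i, ⟪b i, x⟫_ℂ • (b i : H) := by
      conv_lhs => rw [← b.sum_repr' x]
      push_cast
      rfl
    have hinner : ∀ i, ⟪b i, x⟫_ℂ = ⟪((b i : H)), F v⟫_ℂ := by
      intro i
      rw [hx]
      exact (Submodule.coe_inner V (b i) x)
    rw [ContinuousLinearMap.sum_apply]
    rw [hx, hrepr]
    refine Finset.sum_congr rfl fun i _ => ?_
    rw [rkAux_apply, hinner i, ContinuousLinearMap.adjoint_inner_left]
  rw [← hFeq]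
  exact hnorm

end Aux

noncomputable instance compactOperatorsNormedSpace : NormedSpace ℂ (compactOperators H) :=
  SubmoduleClass.toNormedSpace (R := ℂ) (compactOperators H)

set_option maxHeartbeats 2000000 in
set_option synthInstance.maxHeartbeats 1000000 in
open scoped InnerProductSpace ComplexConjugate in
theorem trace_on_compact_operators_eq_zero
    (hinf : ¬ FiniteDimensional ℂ H)
    (f : (compactOperators H) →L[ℂ] ℂ)
    (htr : ∀ a b : compactOperators H, f (a * b) = f (b * a)) :
    f = 0 := by
  classical
  obtain ⟨e, he⟩ := exists_on_seq hinf
  have hee : ∀ n m : ℕ, ⟪e n, e m⟫_ℂ = if n = m then 1 else 0 :=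
    fun n m => orthonormal_iff_ite.mp he n m
  set c : ℂ := f (rkC (e 0) (e 0)) with hc
  have key : ∀ x y : H, f (rkC x y) = ⟪y, x⟫_ℂ * c := by
    intro x y
    have h1 : rkC x (e 0) * rkC (e 0) y = rkC x y := by
      rw [rkC_mul, hee 0 0, if_pos rfl, one_smul]
    have h2 : rkC (e 0) y * rkC x (e 0) = ⟪y, x⟫_ℂ • rkC (e 0) (e 0) := rkC_mul _ _ _ _
    calc f (rkC x y) = f (rkC x (e 0) * rkC (e 0) y) := by rw [h1]
      _ = f (rkC (e 0) y * rkC x (e 0)) := htr _ _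
      _ = ⟪y, x⟫_ℂ * c := by rw [h2, map_smul, smul_eq_mul, hc]
  have hc0 : c = 0 := by
    by_contra hne
    obtain ⟨N, hN⟩ := exists_nat_gt (‖f‖ / ‖c‖)
    have hfP : f (∑ n ∈ Finset.range N, rkC (e n) (e n)) = N * c := by
      rw [map_sum]
      have hcongr : ∀ n ∈ Finset.range N, f (rkC (e n) (e n)) = c := by
        intro n _
        rw [key, hee n n, if_pos rfl, one_mul]
      rw [Finset.sum_congr rfl hcongr, Finset.sum_const, Finset.card_range, nsmul_eq_mul]
    have hb : ‖f (∑ n ∈ Finset.range N, rkC (e n) (e n))‖ ≤ ‖f‖ :=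
      le_trans (f.le_opNorm _) (by
        have := norm_sum_rkC_le he N
        nlinarith [norm_nonneg f])
    rw [hfP] at hb
    have hNc : (N : ℝ) * ‖c‖ ≤ ‖f‖ := by
      simpa [norm_mul] using hb
    have hcpos : 0 < ‖c‖ := norm_pos_iff.mpr hne
    rw [div_lt_iff₀ hcpos] at hN
    linarith
  have hrk0 : ∀ x y : H, f (rkC x y) = 0 := by
    intro x y; rw [key, hc0, mul_zero]
  ext T
  simp only [ContinuousLinearMap.zero_apply]
  have main : ∀ ε : ℝ, 0 < ε → ‖f T‖ ≤ ‖f‖ * ε := by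
    intro ε hε
    obtain ⟨n, x, y, hxy⟩ := exists_finrank_approx (T : H →L[ℂ] H) T.2 hε
    set F : compactOperators H := ∑ i, rkC (x i) (y i) with hFdef
    have hfF : f F = 0 := by
      rw [hFdef, map_sum]
      simp [hrk0]
    have hcoeF : ((F : compactOperators H) : H →L[ℂ] H) = ∑ i, rkAux (x i) (y i) :=
      AddSubmonoidClass.coe_finset_sum _ _
    have hnorm : ‖T - F‖ ≤ ε := by
      show ‖((T - F : compactOperators H) : H →L[ℂ] H)‖ ≤ ε
      have hsub : ((T - F : compactOperators H) : H →L[ℂ] H)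
          = (T : H →L[ℂ] H) - ∑ i, rkAux (x i) (y i) := by
        rw [← hcoeF]; rfl
      rw [hsub]
      exact hxy
    calc ‖f T‖ = ‖f (T - F)‖ := by rw [map_sub, hfF, sub_zero]
      _ ≤ ‖f‖ * ‖T - F‖ := f.le_opNorm _
      _ ≤ ‖f‖ * ε := by nlinarith [norm_nonneg f]
  have h0 : ‖f T‖ ≤ 0 := by
    by_contra h
    push_neg at h
    have hmain := main (‖f T‖ / (2 * (‖f‖ + 1))) (by positivity)
    have hfnn : (0:ℝ) ≤ ‖f‖ := norm_nonneg f
    rw [mul_div_assoc'] at hmain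
    rw [le_div_iff₀ (by positivity)] at hmain
    nlinarith
  exact norm_le_zero_iff.mp h0
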